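/- Let R be a commutative noetherian ring, I an ideal, and let X be a full subcategory of finitely generated R-modules containing all finitely generated projectives and closed under direct summands and extensions. If a finitely generated module A ⊕ A' admits an exact sequence 0 → A ⊕ A' → P → B → 0 with P finitely generated projective and B ∈ X with I ⊆ ann̲_R(B), then A admits an exact sequence 0 → A → P → C → 0 with P finitely generated projective and C ∈ X with I ⊆ ann̲_R(C). -/

import Mathlib

open IsLocalRing

/-- a lies in the stable annihilator of M: multiplication by a on M factors
through a finitely generated projective R-module. -/
def StablyAnn (R : Type) [CommRing R] (M : Type) [AddCommGroup M] [Module R M] (a : R) : Prop :=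
  ∃ (P : Type) (_ : AddCommGroup P) (_ : Module R P),
    Module.Finite R P ∧ Module.Projective R P ∧
    ∃ (f : M →ₗ[R] P) (g : P →ₗ[R] M), g ∘ₗ f = a • (LinearMap.id : M →ₗ[R] M)

/-- The Ext module of two module-category objects. -/
noncomputable def ExtMod (R : Type) [CommRing R] (n : ℕ) (M N : ModuleCat.{0} R) : ModuleCat R :=
  ((Ext R (ModuleCat.{0} R) n).obj (Opposite.op M)).obj N

/-- K is an n-th syzygy of M: there is an exact sequence
0 → K → F_{n-1} → ... → F_0 → M → 0 with finitely generated free modules F_i. -/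
def IsSyzygyCat (R : Type) [CommRing R] : ℕ → ModuleCat.{0} R → ModuleCat.{0} R → Prop
  | 0, K, M => Nonempty (K ≃ₗ[R] M)
  | n + 1, K, M =>
      ∃ (s : ℕ) (p : (Fin s → R) →ₗ[R] M), Function.Surjective p ∧
        IsSyzygyCat R n K (ModuleCat.of R (LinearMap.ker p))

/-- M is a direct summand of Z. -/
def IsSummand (R : Type) [CommRing R] (M Z : ModuleCat.{0} R) : Prop :=
  ∃ (i : M →ₗ[R] Z) (p : Z →ₗ[R] M), p ∘ₗ i = LinearMap.id

/-- The class |X|_n of modules built from X by n-1 extensions together with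
finite direct sums and direct summands. -/
def Ball (R : Type) [CommRing R] (X : ModuleCat.{0} R) : ℕ → ModuleCat.{0} R → Prop
  | 0, M => Subsingleton M
  | 1, M => ∃ s : ℕ, IsSummand R M (ModuleCat.of R (Fin s → X))
  | (n + 2), M =>
      ∃ (A Z B : ModuleCat.{0} R) (f : A →ₗ[R] Z) (g : Z →ₗ[R] B),
        Function.Injective f ∧ Function.Surjective g ∧ LinearMap.range f = LinearMap.ker g ∧
        Ball R X (n + 1) A ∧ Ball R X 1 B ∧ IsSummand R M Z


/-- The syzygy category of X ∩ mod_I(R) is closed under direct summands. -/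
theorem syzygy_summand_closed (R : Type) [CommRing R] [IsNoetherianRing R] (I : Ideal R)
    (X : ModuleCat.{0} R → Prop)
    (hproj : ∀ M : ModuleCat.{0} R, Module.Finite R M → Module.Projective R M → X M)
    (hsummand : ∀ M N : ModuleCat.{0} R, X N →
      (∃ (i : M →ₗ[R] N) (p : N →ₗ[R] M), p ∘ₗ i = LinearMap.id) → X M)
    (hext : ∀ (A Z B : ModuleCat.{0} R) (f : A →ₗ[R] Z) (g : Z →ₗ[R] B),
      Function.Injective f → Function.Surjective g → LinearMap.range f = LinearMap.ker g →
      X A → X B → X Z)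
    (A A' P B : ModuleCat.{0} R)
    (hA : Module.Finite R A) (hA' : Module.Finite R A') (hB : Module.Finite R B)
    (hPfin : Module.Finite R P) (hPproj : Module.Projective R P)
    (f : (A × A' : Type) →ₗ[R] P) (g : P →ₗ[R] B)
    (hf : Function.Injective f) (hg : Function.Surjective g)
    (hfg : LinearMap.range f = LinearMap.ker g)
    (hXB : X B) (hIB : ∀ a ∈ I, StablyAnn R B a) :
    ∃ (P' C : ModuleCat.{0} R), Module.Finite R P' ∧ Module.Projective R P' ∧
      ∃ (f' : A →ₗ[R] P') (g' : P' →ₗ[R] C),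
        Function.Injective f' ∧ Function.Surjective g' ∧
        LinearMap.range f' = LinearMap.ker g' ∧ X C ∧ ∀ a ∈ I, StablyAnn R C a := by
  classical
  -- the two component inclusions
  set f₁ : A →ₗ[R] P := f ∘ₗ LinearMap.inl R A A' with hf₁def
  set f₂ : A' →ₗ[R] P := f ∘ₗ LinearMap.inr R A A' with hf₂def
  set K₁ : Submodule R P := LinearMap.range f₁ with hK₁def
  set K₂ : Submodule R P := LinearMap.range f₂ with hK₂def
  have hK₁g : K₁ ≤ LinearMap.ker g := by
    rintro x ⟨a, rfl⟩
    have : f₁ a ∈ LinearMap.range f := ⟨(a, 0), rfl⟩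
    rw [hfg] at this; exact this
  have hK₂g : K₂ ≤ LinearMap.ker g := by
    rintro x ⟨a, rfl⟩
    have : f₂ a ∈ LinearMap.range f := ⟨(0, a), rfl⟩
    rw [hfg] at this; exact this
  -- the quotients C₁ = P/f(A⊕0), C₂ = P/f(0⊕A')
  let C₁ : ModuleCat.{0} R := ModuleCat.of R (P ⧸ K₁)
  let C₂ : ModuleCat.{0} R := ModuleCat.of R (P ⧸ K₂)
  let Z : ModuleCat.{0} R := ModuleCat.of R ((P ⧸ K₁) × (P ⧸ K₂))
  let π₁ : P →ₗ[R] (P ⧸ K₁) := K₁.mkQ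
  let π₂ : P →ₗ[R] (P ⧸ K₂) := K₂.mkQ
  let gq₁ : (P ⧸ K₁) →ₗ[R] B := K₁.liftQ g hK₁g
  let gq₂ : (P ⧸ K₂) →ₗ[R] B := K₂.liftQ g hK₂g
  -- the sequence 0 → P → C₁ × C₂ → B → 0
  let δ : P →ₗ[R] ((P ⧸ K₁) × (P ⧸ K₂)) := LinearMap.prod π₁ π₂
  let σ : ((P ⧸ K₁) × (P ⧸ K₂)) →ₗ[R] B :=
    gq₁ ∘ₗ LinearMap.fst R _ _ - gq₂ ∘ₗ LinearMap.snd R _ _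
  have hδinj : Function.Injective δ := by
    rw [← LinearMap.ker_eq_bot]
    rw [Submodule.eq_bot_iff]
    intro x hx
    have h1 : x ∈ K₁ := by
      have := congrArg Prod.fst hx
      simpa [δ, π₁, Submodule.Quotient.mk_eq_zero] using this
    have h2 : x ∈ K₂ := by
      have := congrArg Prod.snd hx
      simpa [δ, π₂, Submodule.Quotient.mk_eq_zero] using this
    obtain ⟨a, ha⟩ := h1
    obtain ⟨a', ha'⟩ := h2
    have : f (a, 0) = f (0, a') := by
      simpa [f₁, f₂] using ha.trans ha'.symm
    have h0 : (a, (0 : A')) = ((0 : A), a') := hf this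
    have ha0 : a = 0 := congrArg Prod.fst h0
    rw [← ha, ha0]
    simp [f₁]
    exact map_zero f
  have hσsurj : Function.Surjective σ := by
    intro b
    obtain ⟨p, rfl⟩ := hg b
    exact ⟨(π₁ p, 0), by simp [σ, gq₁, π₁]⟩
  have hσδ : ∀ p : P, σ (δ p) = 0 := by
    intro p; simp [σ, δ, π₁, π₂, gq₁, gq₂]
  have hδσ : LinearMap.range δ = LinearMap.ker σ := by
    apply le_antisymm
    · rintro x ⟨p, rfl⟩
      exact hσδ p
    · rintro ⟨x, y⟩ hxy
      obtain ⟨p, rfl⟩ := Submodule.mkQ_surjective K₁ x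
      obtain ⟨q, rfl⟩ := Submodule.mkQ_surjective K₂ y
      have hgpq : g p = g q := by
        have : σ (K₁.mkQ p, K₂.mkQ q) = 0 := hxy
        have := this
        simpa [σ, gq₁, gq₂, sub_eq_zero] using this
      have hpq : p - q ∈ LinearMap.range f := by
        rw [hfg]; simp [LinearMap.mem_ker, map_sub, hgpq]
      obtain ⟨⟨a, a'⟩, haa'⟩ := hpq
      refine ⟨p - f₁ a, ?_⟩
      have hsplit : f₁ a + f₂ a' = p - q := by
        have h1 : f₁ a + f₂ a' = f (a, a') := by
          simp only [hf₁def, hf₂def, LinearMap.comp_apply, LinearMap.inl_apply,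
            LinearMap.inr_apply, ← map_add]
          congr 1
          exact Prod.ext (by simp) (by simp)
        rw [h1, haa']
      have e1 : K₁.mkQ (p - f₁ a) = K₁.mkQ p := by
        refine (Submodule.Quotient.eq K₁).2 ⟨-a, ?_⟩
        rw [map_neg]; abel
      have e2 : K₂.mkQ (p - f₁ a) = K₂.mkQ q := by
        refine (Submodule.Quotient.eq K₂).2 ⟨a', ?_⟩
        have h2 : (p - f₁ a) - q = (p - q) - f₁ a := by abel
        rw [h2, ← hsplit]; abel
      show δ (p - f₁ a) = _
      simp only [δ, LinearMap.prod_apply, Pi.prod]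
      exact Prod.ext e1 e2
  -- X Z by extension closure, then X C₁ by summand closure
  have hXZ : X Z := hext P Z B δ σ hδinj hσsurj hδσ (hproj P hPfin hPproj) hXB
  have hXC₁ : X C₁ := by
    refine hsummand C₁ Z hXZ ⟨LinearMap.inl R _ _, LinearMap.fst R _ _, ?_⟩
    ext x; rfl
  -- stable annihilator of Z ⊇ that of B (since P is projective), then summand
  have hannZ : ∀ a ∈ I, StablyAnn R ((P ⧸ K₁) × (P ⧸ K₂)) a := by
    intro a ha
    obtain ⟨Q, _, _, hQfin, hQproj, fB, gB, hcomp⟩ := hIB a ha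
    obtain ⟨gt, hgt⟩ := Module.projective_lifting_property σ gB hσsurj
    set e : ((P ⧸ K₁) × (P ⧸ K₂)) →ₗ[R] ((P ⧸ K₁) × (P ⧸ K₂)) := a • LinearMap.id - gt ∘ₗ fB ∘ₗ σ with hedef
    have hrange : ∀ z : (P ⧸ K₁) × (P ⧸ K₂), e z ∈ LinearMap.range δ := by
      intro z
      rw [hδσ, LinearMap.mem_ker]
      have h1 : σ (gt (fB (σ z))) = gB (fB (σ z)) := LinearMap.congr_fun hgt (fB (σ z))
      have h2 : gB (fB (σ z)) = a • σ z := LinearMap.congr_fun hcomp (σ z)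
      show σ (a • z - gt (fB (σ z))) = 0
      rw [map_sub, map_smul, h1, h2, sub_self]
    let eq : P ≃ₗ[R] LinearMap.range δ := LinearEquiv.ofInjective δ hδinj
    let h : ((P ⧸ K₁) × (P ⧸ K₂)) →ₗ[R] P := eq.symm.toLinearMap ∘ₗ e.codRestrict (LinearMap.range δ) hrange
    have hδh : ∀ z : (P ⧸ K₁) × (P ⧸ K₂), δ (h z) = e z := by
      intro z
      have h0 : (eq (h z)).1 = e z := by
        simp only [h, LinearMap.coe_comp, Function.comp_apply, LinearEquiv.coe_coe]
        rw [LinearEquiv.apply_symm_apply]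
        rfl
      exact h0
    refine ⟨Q × P, inferInstance, inferInstance, inferInstance, inferInstance,
      LinearMap.prod (fB ∘ₗ σ) h, LinearMap.coprod gt δ, ?_⟩
    refine LinearMap.ext fun z => ?_
    show gt (fB (σ z)) + δ (h z) = a • z
    rw [hδh z]
    show gt (fB (σ z)) + (a • z - gt (fB (σ z))) = a • z
    abel
  have hannC₁ : ∀ a ∈ I, StablyAnn R (P ⧸ K₁) a := by
    intro a ha
    obtain ⟨Q, _, _, hQfin, hQproj, F, G, hFG⟩ := hannZ a ha
    refine ⟨Q, inferInstance, inferInstance, hQfin, hQproj,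
      F ∘ₗ LinearMap.inl R _ _, LinearMap.fst R _ _ ∘ₗ G, ?_⟩
    refine LinearMap.ext fun x => ?_
    have h4 := LinearMap.congr_fun hFG ((x, 0) : (P ⧸ K₁) × (P ⧸ K₂))
    have h5 := congrArg Prod.fst h4
    show (G (F ((x, 0) : (P ⧸ K₁) × (P ⧸ K₂)))).1 = a • x
    exact h5
  -- now assemble: 0 → A → P → C₁ → 0
  refine ⟨P, C₁, hPfin, hPproj, f₁, π₁, ?_, Submodule.mkQ_surjective K₁, ?_, hXC₁, hannC₁⟩
  · intro a b hab
    have : f (a, 0) = f (b, 0) := hab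
    exact (Prod.ext_iff.1 (hf this)).1
  · rw [show LinearMap.ker π₁ = K₁ from Submodule.ker_mkQ K₁]
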